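/- If Ω_{m,M}^{δ} is non-empty for some δ > 0, then there exists ω ∈ Ω_{m,M}^{δ} with ASB(ω) = δ exactly. The witness is obtained by continuously shrinking the first row: ω^ε with ω^ε_{1j} = ε·ω_{1j}, ω^ε_{mj} = ω_{mj} + (1−ε)·ω_{1j}, and other rows unchanged, using the intermediate value theorem on ε ↦ ASB(ω^ε), noting ASB(ω^0) = 0, ASB(ω^1) ≥ δ, and WSB(ω^ε) ≥ WSB(ω) for all ε ∈ [0,1]. -/

import Mathlib

open Finset Real

namespace MABS

/-- Euclidean norm of a vector in `ℝ^M`. -/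
noncomputable def vnorm {M : ℕ} (v : Fin M → ℝ) : ℝ := Real.sqrt (∑ j, (v j) ^ 2)

/-- Euclidean norm of the `i`-th row of the mixing matrix `ω`. -/
noncomputable def rowNorm {m M : ℕ} (ω : Fin m → Fin M → ℝ) (i : Fin m) : ℝ := vnorm (ω i)

/-- `e` has all its entries in the alphabet `𝔄`. -/
def inAlph (𝔄 : Finset ℝ) {m : ℕ} (e : Fin m → ℝ) : Prop := ∀ i, e i ∈ 𝔄

/-- The mixture `e ω ∈ ℝ^M` of the rows of `ω` with coefficients `e`. -/
noncomputable def mix {m M : ℕ} (e : Fin m → ℝ) (ω : Fin m → Fin M → ℝ) : Fin M → ℝ :=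
  fun j => ∑ i, e i * ω i j

/-- Alphabet separation boundary `ASB(ω) = min_{e ≠ e' ∈ 𝔄^m} ‖eω - e'ω‖ / √M`. -/
noncomputable def ASB (𝔄 : Finset ℝ) {m M : ℕ} (ω : Fin m → Fin M → ℝ) : ℝ :=
  sInf {x : ℝ | ∃ e e' : Fin m → ℝ, inAlph 𝔄 e ∧ inAlph 𝔄 e' ∧ e ≠ e' ∧
    x = vnorm (mix e ω - mix e' ω) / Real.sqrt (M : ℝ)}

/-- `WSB(ω) ≥ δ`, i.e. every consecutive row-norm gap is at least `2δ√M/(1+m·a_k)`. -/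
def WSBge (ak δ : ℝ) {m M : ℕ} (ω : Fin m → Fin M → ℝ) : Prop :=
  ∀ i j : Fin m, (j : ℕ) = (i : ℕ) + 1 →
    δ ≤ ((1 + (m : ℝ) * ak) / (2 * Real.sqrt (M : ℝ))) * (rowNorm ω j - rowNorm ω i)

/-- Weights separation boundary as a real number. -/
noncomputable def WSBval (ak : ℝ) {m M : ℕ} (ω : Fin m → Fin M → ℝ) : ℝ :=
  ((1 + (m : ℝ) * ak) / (2 * Real.sqrt (M : ℝ))) *
    sInf {x : ℝ | ∃ i j : Fin m, (j : ℕ) = (i : ℕ) + 1 ∧ x = rowNorm ω j - rowNorm ω i}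

/-- `ω ∈ Ω_{m,M}`: nonnegative entries, columns summing to one, strictly increasing
positive row norms. -/
def Omega {m M : ℕ} (ω : Fin m → Fin M → ℝ) : Prop :=
  (∀ i j, 0 ≤ ω i j) ∧ (∀ j, ∑ i, ω i j = 1) ∧
    (∀ i, 0 < rowNorm ω i) ∧ StrictMono (rowNorm ω)

/-- The alphabet `𝔄 = {0, 1, a₃, …, a_k}` with `1 < a₃ < … < a_k`: it contains `0` and `1`,
`ak` is its maximal element, and every nonzero element is at least `1`. -/
def AlphOK (𝔄 : Finset ℝ) (ak : ℝ) : Prop :=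
  (0 : ℝ) ∈ 𝔄 ∧ (1 : ℝ) ∈ 𝔄 ∧ ak ∈ 𝔄 ∧ (∀ x ∈ 𝔄, x ≤ ak) ∧ (∀ x ∈ 𝔄, x = 0 ∨ 1 ≤ x)

/-- `Δ𝔄_min`, the minimal distance between distinct alphabet values. -/
noncomputable def DeltaMin (𝔄 : Finset ℝ) : ℝ :=
  sInf {x : ℝ | ∃ a ∈ 𝔄, ∃ b ∈ 𝔄, a ≠ b ∧ x = |a - b|}

/-- The `i`-th standard unit (row) vector in `ℝ^m`. -/
def unitRow {m : ℕ} (i : Fin m) : Fin m → ℝ := fun i' => if i' = i then 1 else 0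

/-- `F = ΠA` is a separable finite-alphabet design: every row lies in `𝔄^m` and every
standard unit vector occurs among the rows. -/
def Separable (𝔄 : Finset ℝ) {n m : ℕ} (F : Fin n → Fin m → ℝ) : Prop :=
  (∀ j, inAlph 𝔄 (F j)) ∧ ∀ i : Fin m, ∃ j, F j = unitRow i

end MABS

section StmtEightAux
open MABS

lemma aux_continuous_inf' {ι : Type*} {s : Finset ι} (hs : s.Nonempty)
    (f : ι → ℝ → ℝ) (hf : ∀ i, Continuous (f i)) :
    Continuous fun x => s.inf' hs fun i => f i x := by
  induction hs using Finset.Nonempty.cons_induction with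
  | singleton i => simpa using hf i
  | cons a s ha hs ih =>
      have key : (fun x => (Finset.cons a s ha).inf' (Finset.cons_nonempty ha) fun i => f i x)
          = fun x => min (f a x) (s.inf' hs fun i => f i x) := by
        funext x
        rw [Finset.inf'_cons hs]
      rw [key]
      exact (hf a).min ih

noncomputable def auxPairs (𝔄 : Finset ℝ) (m : ℕ) :
    Finset ((Fin m → {a : ℝ // a ∈ 𝔄}) × (Fin m → {a : ℝ // a ∈ 𝔄})) :=
  @Finset.filter _
    (fun p => (fun i => ((p.1 i : ℝ))) ≠ (fun i => ((p.2 i : ℝ))))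
    (Classical.decPred _) Finset.univ

lemma mem_auxPairs {𝔄 : Finset ℝ} {m : ℕ}
    {p : (Fin m → {a : ℝ // a ∈ 𝔄}) × (Fin m → {a : ℝ // a ∈ 𝔄})} :
    p ∈ auxPairs 𝔄 m ↔ (fun i => ((p.1 i : ℝ))) ≠ (fun i => ((p.2 i : ℝ))) := by
  classical
  simp [auxPairs]

noncomputable def auxVal (𝔄 : Finset ℝ) {m M : ℕ} (ψ : Fin m → Fin M → ℝ)
    (p : (Fin m → {a : ℝ // a ∈ 𝔄}) × (Fin m → {a : ℝ // a ∈ 𝔄})) : ℝ :=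
  vnorm (mix (fun i => (p.1 i : ℝ)) ψ - mix (fun i => (p.2 i : ℝ)) ψ) / Real.sqrt (M : ℝ)

lemma auxVal_nonneg (𝔄 : Finset ℝ) {m M : ℕ} (ψ : Fin m → Fin M → ℝ)
    (p : (Fin m → {a : ℝ // a ∈ 𝔄}) × (Fin m → {a : ℝ // a ∈ 𝔄})) :
    0 ≤ auxVal 𝔄 ψ p :=
  div_nonneg (Real.sqrt_nonneg _) (Real.sqrt_nonneg _)

lemma auxPairs_nonempty {𝔄 : Finset ℝ} {m : ℕ} (h0 : (0:ℝ) ∈ 𝔄) (h1 : (1:ℝ) ∈ 𝔄)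
    (hm : 0 < m) : (auxPairs 𝔄 m).Nonempty := by
  refine ⟨(fun _ => ⟨0, h0⟩, fun _ => ⟨1, h1⟩), mem_auxPairs.2 ?_⟩
  intro h
  have := congrFun h ⟨0, hm⟩
  simp at this

lemma aux_ASB_eq (𝔄 : Finset ℝ) {m M : ℕ} (h : (auxPairs 𝔄 m).Nonempty)
    (ψ : Fin m → Fin M → ℝ) :
    ASB 𝔄 ψ = (auxPairs 𝔄 m).inf' h (auxVal 𝔄 ψ) := by
  rw [Finset.inf'_eq_csInf_image]
  unfold ASB
  congr 1
  ext x
  constructor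
  · rintro ⟨e, e', he, he', hne, rfl⟩
    exact ⟨((fun i => ⟨e i, he i⟩), (fun i => ⟨e' i, he' i⟩)), mem_auxPairs.2 hne, rfl⟩
  · rintro ⟨p, hp, rfl⟩
    exact ⟨fun i => (p.1 i : ℝ), fun i => (p.2 i : ℝ), fun i => (p.1 i).2, fun i => (p.2 i).2,
      mem_auxPairs.1 hp, rfl⟩

noncomputable def auxTweak {m M : ℕ} (ω : Fin m → Fin M → ℝ) (i0 im : Fin m) (ε : ℝ) :
    Fin m → Fin M → ℝ :=
  fun i j => if i = i0 then ε * ω i0 j else if i = im then ω im j + (1 - ε) * ω i0 j else ω i j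

variable {m M : ℕ} (ω : Fin m → Fin M → ℝ) (i0 im : Fin m)

lemma auxTweak_one : auxTweak ω i0 im 1 = ω := by
  funext i j
  unfold auxTweak
  split_ifs with h1 h2 <;> subst_vars <;> ring

lemma auxTweak_cont (i : Fin m) (j : Fin M) :
    Continuous fun ε => auxTweak ω i0 im ε i j := by
  unfold auxTweak
  split_ifs <;> fun_prop

lemma auxTweak_nonneg (hω : ∀ i j, 0 ≤ ω i j) {ε : ℝ} (hε : 0 ≤ ε) (hε1 : ε ≤ 1)
    (i : Fin m) (j : Fin M) : 0 ≤ auxTweak ω i0 im ε i j := by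
  unfold auxTweak
  split_ifs with h1 h2
  · exact mul_nonneg hε (hω _ _)
  · exact add_nonneg (hω _ _) (mul_nonneg (by linarith) (hω _ _))
  · exact hω _ _

lemma auxTweak_sum (h : i0 ≠ im) (ε : ℝ) (j : Fin M) :
    ∑ i, auxTweak ω i0 im ε i j = ∑ i, ω i j := by
  have key : ∀ i, auxTweak ω i0 im ε i j
      = ω i j + ((if i = i0 then (ε - 1) * ω i0 j else 0)
        + (if i = im then (1 - ε) * ω i0 j else 0)) := by
    intro i
    unfold auxTweak
    by_cases h1 : i = i0
    · subst h1; simp [h]; ring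
    · by_cases h2 : i = im
      · subst h2; simp [h1]
      · simp [h1, h2]
  simp only [key, Finset.sum_add_distrib, Finset.sum_ite_eq', Finset.mem_univ, if_true]
  ring

lemma aux_vnorm_mono {u v : Fin M → ℝ} (h : ∀ j, 0 ≤ u j) (h2 : ∀ j, u j ≤ v j) :
    vnorm u ≤ vnorm v :=
  Real.sqrt_le_sqrt (Finset.sum_le_sum fun j _ => pow_le_pow_left₀ (h j) (h2 j) 2)

lemma auxTweak_rowNorm_i0 (h : i0 ≠ im) {ε : ℝ} (hε : 0 ≤ ε) :
    rowNorm (auxTweak ω i0 im ε) i0 = ε * rowNorm ω i0 := by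
  unfold rowNorm vnorm auxTweak
  simp only [if_pos rfl, if_true]
  have key : ∑ j, (ε * ω i0 j) ^ 2 = ε ^ 2 * ∑ j, (ω i0 j) ^ 2 := by
    rw [Finset.mul_sum]; exact Finset.sum_congr rfl fun j _ => by ring
  rw [key, Real.sqrt_mul (sq_nonneg ε), Real.sqrt_sq hε]

lemma auxTweak_rowNorm_mid {i : Fin m} (h1 : i ≠ i0) (h2 : i ≠ im) (ε : ℝ) :
    rowNorm (auxTweak ω i0 im ε) i = rowNorm ω i := by
  unfold rowNorm vnorm auxTweak
  simp [h1, h2]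

lemma auxTweak_rowNorm_im (h : i0 ≠ im) (hω : ∀ i j, 0 ≤ ω i j) {ε : ℝ} (hε1 : ε ≤ 1) :
    rowNorm ω im ≤ rowNorm (auxTweak ω i0 im ε) im := by
  unfold rowNorm
  apply aux_vnorm_mono (fun j => hω _ _)
  intro j
  unfold auxTweak
  simp [h.symm]
  nlinarith [hω i0 j]

end StmtEightAux

/-- If `Ω_{m,M}^δ` is non-empty for some `δ > 0`, then there exists an
element of `Ω_{m,M}^δ` with `ASB = δ` exactly (and still `WSB ≥ δ`). -/
theorem stmt8 {m M : ℕ} (hm : 2 ≤ m) (hM : 0 < M) (𝔄 : Finset ℝ) (ak : ℝ)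
    (hA : MABS.AlphOK 𝔄 ak) (δ : ℝ) (hδ : 0 < δ)
    (ω : Fin m → Fin M → ℝ) (hΩ : MABS.Omega ω)
    (hasb : δ ≤ MABS.ASB 𝔄 ω) (hwsb : MABS.WSBge ak δ ω) :
    ∃ ψ : Fin m → Fin M → ℝ,
      MABS.Omega ψ ∧ MABS.ASB 𝔄 ψ = δ ∧ MABS.WSBge ak δ ψ := by
  classical
  obtain ⟨hnn, hsum, hpos, hmono⟩ := hΩ
  obtain ⟨h0, h1, hakA, hmax, hone⟩ := hA
  have hm0 : 0 < m := by omega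
  set i0 : Fin m := ⟨0, hm0⟩ with hi0
  set im : Fin m := ⟨m - 1, by omega⟩ with him
  have hne : i0 ≠ im := by
    simp only [hi0, him, ne_eq, Fin.mk.injEq]
    omega
  have hD : (auxPairs 𝔄 m).Nonempty := auxPairs_nonempty h0 h1 hm0
  set f : ℝ → ℝ := fun ε => (auxPairs 𝔄 m).inf' hD (auxVal 𝔄 (auxTweak ω i0 im ε)) with hf
  have hASBf : ∀ ε, MABS.ASB 𝔄 (auxTweak ω i0 im ε) = f ε :=
    fun ε => aux_ASB_eq 𝔄 hD (auxTweak ω i0 im ε)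
  have hcont : Continuous f := by
    apply aux_continuous_inf' hD (fun p ε => auxVal 𝔄 (auxTweak ω i0 im ε) p)
    intro p
    unfold auxVal
    apply Continuous.div_const
    unfold MABS.vnorm
    apply Continuous.sqrt
    apply continuous_finset_sum
    intro j _
    simp only [Pi.sub_apply]
    apply Continuous.pow
    apply Continuous.sub <;>
      · unfold MABS.mix
        apply continuous_finset_sum
        intro i _
        exact continuous_const.mul (auxTweak_cont ω i0 im i j)
  have hfnonneg : ∀ ε, 0 ≤ f ε := fun ε =>
    Finset.le_inf' hD _ fun p _ => auxVal_nonneg 𝔄 _ p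
  have hf0 : f 0 = 0 := by
    have hemem : ((fun i => if i = i0 then (⟨1, h1⟩ : {a : ℝ // a ∈ 𝔄}) else ⟨0, h0⟩,
        fun _ => (⟨0, h0⟩ : {a : ℝ // a ∈ 𝔄})) ∈ auxPairs 𝔄 m) := by
      rw [mem_auxPairs]
      intro hcontra
      have := congrFun hcontra i0
      simp at this
    have hval : auxVal 𝔄 (auxTweak ω i0 im 0)
        ((fun i => if i = i0 then (⟨1, h1⟩ : {a : ℝ // a ∈ 𝔄}) else ⟨0, h0⟩,
          fun _ => (⟨0, h0⟩ : {a : ℝ // a ∈ 𝔄}))) = 0 := by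
      unfold auxVal
      have hz : (MABS.mix (fun i => ((if i = i0 then (⟨1, h1⟩ : {a : ℝ // a ∈ 𝔄})
            else ⟨0, h0⟩ : {a : ℝ // a ∈ 𝔄}) : ℝ)) (auxTweak ω i0 im 0)
          - MABS.mix (fun _ => ((⟨0, h0⟩ : {a : ℝ // a ∈ 𝔄}) : ℝ)) (auxTweak ω i0 im 0)) = 0 := by
        funext j
        simp only [Pi.sub_apply, Pi.zero_apply, MABS.mix]
        have e1 : ∀ i : Fin m, ((if i = i0 then (⟨1, h1⟩ : {a : ℝ // a ∈ 𝔄})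
            else ⟨0, h0⟩ : {a : ℝ // a ∈ 𝔄}) : ℝ) * auxTweak ω i0 im 0 i j = 0 := by
          intro i
          by_cases hii : i = i0
          · subst hii
            simp [auxTweak]
          · simp [hii]
        simp [e1]
      rw [hz]
      simp [MABS.vnorm]
    have hle := Finset.inf'_le (auxVal 𝔄 (auxTweak ω i0 im 0)) hemem
    rw [hval] at hle
    exact le_antisymm hle (hfnonneg 0)
  have hf1 : δ ≤ f 1 := by
    rw [← hASBf 1, auxTweak_one]
    exact hasb
  have hIVT := intermediate_value_Icc (by norm_num : (0:ℝ) ≤ 1) hcont.continuousOn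
  have hδmem : δ ∈ Set.Icc (f 0) (f 1) := ⟨by rw [hf0]; exact hδ.le, hf1⟩
  obtain ⟨ε, hεIcc, hfε⟩ := hIVT hδmem
  obtain ⟨hε0, hε1⟩ := hεIcc
  have hεpos : 0 < ε := by
    rcases lt_or_eq_of_le hε0 with h | h
    · exact h
    · exfalso
      rw [← h, hf0] at hfε
      exact hδ.ne hfε
  have hle : ∀ i, i ≠ im → MABS.rowNorm (auxTweak ω i0 im ε) i ≤ MABS.rowNorm ω i := by
    intro i hi
    by_cases h : i = i0
    · subst h
      rw [auxTweak_rowNorm_i0 ω i0 im hne hε0]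
      nlinarith [(hpos i0).le, hε1]
    · rw [auxTweak_rowNorm_mid ω i0 im h hi]
  have hge : ∀ i, i ≠ i0 → MABS.rowNorm ω i ≤ MABS.rowNorm (auxTweak ω i0 im ε) i := by
    intro i hi
    by_cases h : i = im
    · subst h
      exact auxTweak_rowNorm_im ω i0 im hne hnn hε1
    · rw [auxTweak_rowNorm_mid ω i0 im hi h]
  refine ⟨auxTweak ω i0 im ε, ⟨auxTweak_nonneg ω i0 im hnn hε0 hε1,
    fun j => (auxTweak_sum ω i0 im hne ε j).trans (hsum j), ?_, ?_⟩, ?_, ?_⟩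
  · intro i
    by_cases h : i = i0
    · subst h
      rw [auxTweak_rowNorm_i0 ω i0 im hne hε0]
      exact mul_pos hεpos (hpos i0)
    · exact lt_of_lt_of_le (hpos i) (hge i h)
  · intro i i' hlt
    have hv := Fin.lt_def.mp hlt
    have h1' : i ≠ im := by
      intro h
      rw [h, him] at hv
      have := i'.isLt
      simp at hv
      omega
    have h2' : i' ≠ i0 := by
      intro h
      rw [h, hi0] at hv
      simp at hv
    calc MABS.rowNorm (auxTweak ω i0 im ε) i ≤ MABS.rowNorm ω i := hle i h1'
      _ < MABS.rowNorm ω i' := hmono hlt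
      _ ≤ MABS.rowNorm (auxTweak ω i0 im ε) i' := hge i' h2'
  · rw [hASBf ε]
    exact hfε
  · intro i j hij
    have hC : 0 ≤ (1 + (m:ℝ) * ak) / (2 * Real.sqrt (M:ℝ)) := by
      have hak1 : (1:ℝ) ≤ ak := hmax 1 h1
      have hm2 : (2:ℝ) ≤ (m:ℝ) := by exact_mod_cast hm
      apply div_nonneg
      · nlinarith
      · positivity
    have hji0 : j ≠ i0 := by
      intro h
      rw [h, hi0] at hij
      simp at hij
    have hiim : i ≠ im := by
      intro h
      rw [h, him] at hij
      have := j.isLt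
      simp at hij
      omega
    have hgap : MABS.rowNorm ω j - MABS.rowNorm ω i
        ≤ MABS.rowNorm (auxTweak ω i0 im ε) j - MABS.rowNorm (auxTweak ω i0 im ε) i := by
      have := hle i hiim
      have := hge j hji0
      linarith
    calc δ ≤ ((1 + (m:ℝ) * ak) / (2 * Real.sqrt (M:ℝ)))
          * (MABS.rowNorm ω j - MABS.rowNorm ω i) := hwsb i j hij
      _ ≤ ((1 + (m:ℝ) * ak) / (2 * Real.sqrt (M:ℝ)))
          * (MABS.rowNorm (auxTweak ω i0 im ε) j - MABS.rowNorm (auxTweak ω i0 im ε) i) :=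
        mul_le_mul_of_nonneg_left hgap hC
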